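/- Let A be an n-by-n weighted shift matrix (n ≥ 2) with weights a_1, …, a_n. Then A is reducible if and only if at least one of the following holds: (a) a_i = a_j = 0 for some 1 ≤ i < j ≤ n; (b) A has periodic weights, i.e., there exists k with 1 ≤ k ≤ ⌊n/2⌋ such that k divides n and |a_j| = |a_{k+j}| for all 1 ≤ j ≤ n−k. -/

import Mathlib

open Matrix

/-- The n-by-n weighted shift matrix with weights `a 0, …, a (n-1)`
(representing `a_1, …, a_n`): the `(i, i+1)` entry is `a i` (cyclically). -/
def wsMatrix {n : ℕ} (a : Fin n → ℂ) : Matrix (Fin n) (Fin n) ℂ :=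
  fun i j => if (j : ℕ) = ((i : ℕ) + 1) % n then a i else 0

/-- Two square complex matrices are unitarily equivalent if `B = U* A U`
for some unitary `U`. -/
def UnitarilyEquiv {n : ℕ} (A B : Matrix (Fin n) (Fin n) ℂ) : Prop :=
  ∃ U : Matrix (Fin n) (Fin n) ℂ, U ∈ Matrix.unitaryGroup (Fin n) ℂ ∧ B = Uᴴ * A * U

/-- A square complex matrix is reducible if some orthogonal projection `P`
other than `0` and `I` commutes with it (equivalently, `A` and `Aᴴ` have a
common nontrivial invariant subspace). -/
def MatReducible {n : ℕ} (A : Matrix (Fin n) (Fin n) ℂ) : Prop :=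
  ∃ P : Matrix (Fin n) (Fin n) ℂ, P * P = P ∧ Pᴴ = P ∧ P ≠ 0 ∧ P ≠ 1 ∧ A * P = P * A

/-- The weights `a_1, …, a_n` (0-indexed as `a 0, …, a (n-1)`) are periodic with
period `k`: `1 ≤ k ≤ ⌊n/2⌋`, `k ∣ n` and `|a_j| = |a_{k+j}|` for `1 ≤ j ≤ n-k`. -/
def PeriodicWeights (n k : ℕ) (a : Fin n → ℂ) : Prop :=
  1 ≤ k ∧ k ≤ n / 2 ∧ k ∣ n ∧
    ∀ i : Fin n, ∀ h : (i : ℕ) + k < n,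
      ‖a i‖ = ‖a ⟨(i : ℕ) + k, h⟩‖

open Finset
open Fin.NatCast Fin.CommRing

section Aux
variable {n : ℕ} [NeZero n] (a : Fin n → ℂ)

lemma wsMatrix_apply (hn : 2 ≤ n) (i j : Fin n) :
    wsMatrix a i j = if j = i + 1 then a i else 0 := by
  unfold wsMatrix
  congr 1
  have h1 : ((1 : Fin n) : ℕ) = 1 % n := rfl
  have h2 : 1 % n = 1 := Nat.mod_eq_of_lt (by omega)
  rw [Fin.ext_iff, Fin.add_def, h1, h2]

lemma wsMatrix_apply' (hn : 2 ≤ n) (i j : Fin n) :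
    wsMatrix a i j = if i = j - 1 then a (j - 1) else 0 := by
  rw [wsMatrix_apply a hn]
  by_cases h : i = j - 1
  · subst h; simp
  · rw [if_neg h, if_neg]
    intro hj; apply h; rw [hj]; ring

lemma mulL (hn : 2 ≤ n) (B : Matrix (Fin n) (Fin n) ℂ) (i j : Fin n) :
    (wsMatrix a * B) i j = a i * B (i + 1) j := by
  rw [Matrix.mul_apply]
  rw [Finset.sum_eq_single (i+1)]
  · rw [wsMatrix_apply a hn]; simp
  · intro b _ hb; rw [wsMatrix_apply a hn, if_neg hb, zero_mul]
  · simp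

end Aux

section Aux2
variable {n : ℕ} [NeZero n] (a : Fin n → ℂ)

lemma mulR (hn : 2 ≤ n) (B : Matrix (Fin n) (Fin n) ℂ) (i j : Fin n) :
    (B * wsMatrix a) i j = B i (j - 1) * a (j - 1) := by
  rw [Matrix.mul_apply]
  rw [Finset.sum_eq_single (j-1)]
  · rw [wsMatrix_apply' a hn]; simp
  · intro b _ hb; rw [wsMatrix_apply' a hn, if_neg hb, mul_zero]
  · simp

lemma mulLH (hn : 2 ≤ n) (B : Matrix (Fin n) (Fin n) ℂ) (i j : Fin n) :
    ((wsMatrix a)ᴴ * B) i j = (starRingEnd ℂ) (a (i - 1)) * B (i - 1) j := by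
  rw [Matrix.mul_apply]
  rw [Finset.sum_eq_single (i-1)]
  · rw [Matrix.conjTranspose_apply, wsMatrix_apply' a hn]; simp
  · intro b _ hb
    rw [Matrix.conjTranspose_apply, wsMatrix_apply a hn, if_neg]; · simp
    intro hi; apply hb; rw [hi]; ring
  · simp

lemma mulRH (hn : 2 ≤ n) (B : Matrix (Fin n) (Fin n) ℂ) (i j : Fin n) :
    (B * (wsMatrix a)ᴴ) i j = B i (j + 1) * (starRingEnd ℂ) (a j) := by
  rw [Matrix.mul_apply]
  rw [Finset.sum_eq_single (j+1)]
  · rw [Matrix.conjTranspose_apply, wsMatrix_apply a hn]; simp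
  · intro b _ hb
    rw [Matrix.conjTranspose_apply, wsMatrix_apply a hn, if_neg]; · simp
    intro hi; apply hb; rw [hi]
  · simp

end Aux2

section Comm
variable {n : ℕ} [NeZero n] {a : Fin n → ℂ} {B : Matrix (Fin n) (Fin n) ℂ}

lemma E1 (hn : 2 ≤ n) (hc : wsMatrix a * B = B * wsMatrix a) (i j : Fin n) :
    a i * B (i + 1) (j + 1) = B i j * a j := by
  have := congrFun (congrFun hc i) (j + 1)
  rw [mulL a hn, mulR a hn] at this
  simpa using this

lemma E2 (hn : 2 ≤ n) (hc : wsMatrix a * B = B * wsMatrix a) (hH : Bᴴ = B) (i j : Fin n) :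
    (starRingEnd ℂ) (a i) * B i j = B (i + 1) (j + 1) * (starRingEnd ℂ) (a j) := by
  have hc' : (wsMatrix a)ᴴ * B = B * (wsMatrix a)ᴴ := by
    have := congrArg Matrix.conjTranspose hc
    rw [Matrix.conjTranspose_mul, Matrix.conjTranspose_mul, hH] at this
    exact this.symm
  have := congrFun (congrFun hc' (i + 1)) j
  rw [mulLH a hn, mulRH a hn] at this
  simpa using this

lemma key1 (hn : 2 ≤ n) (hc : wsMatrix a * B = B * wsMatrix a) (hH : Bᴴ = B) (i j : Fin n)
    (hB : B i j ≠ 0) : ‖a i‖ = ‖a j‖ := by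
  have e1 := E1 hn hc i j
  have e2 := E2 hn hc hH i j
  have key : (a i * (starRingEnd ℂ) (a i)) * B i j = (a j * (starRingEnd ℂ) (a j)) * B i j := by
    calc (a i * (starRingEnd ℂ) (a i)) * B i j
        = a i * ((starRingEnd ℂ) (a i) * B i j) := by ring
      _ = a i * (B (i+1) (j+1) * (starRingEnd ℂ) (a j)) := by rw [e2]
      _ = (a i * B (i+1) (j+1)) * (starRingEnd ℂ) (a j) := by ring
      _ = (B i j * a j) * (starRingEnd ℂ) (a j) := by rw [e1]
      _ = (a j * (starRingEnd ℂ) (a j)) * B i j := by ring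
  have h3 : a i * (starRingEnd ℂ) (a i) = a j * (starRingEnd ℂ) (a j) :=
    mul_right_cancel₀ hB key
  rw [Complex.mul_conj, Complex.mul_conj] at h3
  have : Complex.normSq (a i) = Complex.normSq (a j) := by exact_mod_cast h3
  rw [Complex.norm_def, Complex.norm_def, this]

lemma key2 (hn : 2 ≤ n) (hc : wsMatrix a * B = B * wsMatrix a) (i j : Fin n)
    (hB : B i j ≠ 0) (hai : a i ≠ 0) (haj : a j ≠ 0) : B (i + 1) (j + 1) ≠ 0 := by
  have e1 := E1 hn hc i j
  intro h
  rw [h, mul_zero] at e1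
  exact (mul_ne_zero hB haj) e1.symm

lemma key3 (hn : 2 ≤ n) (hc : wsMatrix a * B = B * wsMatrix a) (hH : Bᴴ = B) (i j : Fin n)
    (hB : B i j = 0) (ha : a i ≠ 0 ∨ a j ≠ 0) : B (i + 1) (j + 1) = 0 := by
  rcases ha with hai | haj
  · have e1 := E1 hn hc i j
    rw [hB, zero_mul] at e1
    exact (mul_eq_zero.mp e1).resolve_left hai
  · have e2 := E2 hn hc hH i j
    rw [hB, mul_zero] at e2
    have := e2.symm
    rcases mul_eq_zero.mp this with h | h
    · exact h
    · exact absurd h (by simpa using haj)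

lemma key4 (hn : 2 ≤ n) (hc : wsMatrix a * B = B * wsMatrix a) (m l : Fin n)
    (hm : a m = 0) (hl : a l ≠ 0) : B m l = 0 := by
  have e1 := E1 hn hc m l
  rw [hm, zero_mul] at e1
  exact (mul_eq_zero.mp e1.symm).resolve_right hl

lemma key5 (hn : 2 ≤ n) (hc : wsMatrix a * B = B * wsMatrix a) (hH : Bᴴ = B) (m l : Fin n)
    (hm : a m = 0) (hl : a l ≠ 0) : B (m + 1) (l + 1) = 0 := by
  have e2 := E2 hn hc hH m l
  rw [hm, map_zero, zero_mul] at e2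
  rcases mul_eq_zero.mp e2.symm with h | h
  · exact h
  · exact absurd h (by simpa using hl)

end Comm

section Arith
variable {n : ℕ} [NeZero n]

lemma fin_reach (i s : Fin n) : ∃ t : ℕ, s = i + (t : Fin n) :=
  ⟨(s - i).val, by rw [Fin.cast_val_eq_self]; ring⟩

lemma fin_cast_succ (t : ℕ) : ((t + 1 : ℕ) : Fin n) = (t : Fin n) + 1 := by
  push_cast; ring

lemma periodic_of_invariant (hn : 2 ≤ n) (a : Fin n → ℂ) (d : Fin n) (hd : d ≠ 0)
    (h : ∀ s : Fin n, ‖a s‖ = ‖a (s + d)‖) :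
    ∃ k, PeriodicWeights n k a := by
  have hdv : (d : ℕ) ≠ 0 := by
    intro h0; exact hd (Fin.ext (by simpa using h0))
  set g := Nat.gcd (d : ℕ) n with hg
  have hiter : ∀ (t : ℕ) (s : Fin n),
      ‖a s‖ = ‖a (s + t • d)‖ := by
    intro t
    induction t with
    | zero => simp
    | succ t ih =>
      intro s
      have : s + (t + 1) • d = (s + d) + t • d := by rw [succ_nsmul]; ring
      rw [this, ← ih (s + d), h s]
  have hglt : g < n := by
    have h1 : g ≤ (d : ℕ) := Nat.gcd_le_left _ (Nat.pos_of_ne_zero hdv)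
    exact lt_of_le_of_lt h1 d.isLt
  obtain ⟨u, -, hu⟩ := Nat.exists_mul_mod_eq_gcd hglt
  have hsmul : u • d = (g : Fin n) := by
    apply Fin.ext
    rw [nsmul_eq_mul]
    rw [Fin.val_mul]
    have h1 : ((u : Fin n) : ℕ) = u % n := by simp [Fin.val_natCast]
    rw [h1, Nat.mod_mul_mod, Nat.mul_comm, hu]
    simp [Fin.val_natCast, Nat.mod_eq_of_lt hglt]
    exact hg.symm
  have hkey : ∀ s : Fin n, ‖a s‖ = ‖a (s + (g : Fin n))‖ := by
    intro s; rw [← hsmul]; exact hiter u s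
  have hgpos : 1 ≤ g := Nat.one_le_iff_ne_zero.mpr (by
    intro h0
    exact hdv (Nat.eq_zero_of_gcd_eq_zero_left h0))
  have hgdvd : g ∣ n := Nat.gcd_dvd_right _ _
  refine ⟨g, hgpos, ?_, hgdvd, ?_⟩
  · rw [Nat.le_div_iff_mul_le (by norm_num)]
    obtain ⟨c, hc⟩ := hgdvd
    have hc2 : 2 ≤ c := by
      rcases Nat.lt_or_ge c 2 with h2 | h2
      · interval_cases c <;> omega
      · exact h2
    calc g * 2 ≤ g * c := Nat.mul_le_mul_left g hc2
      _ = n := hc.symm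
  · intro i hlt
    have := hkey i
    have heq : i + (g : Fin n) = ⟨(i : ℕ) + g, hlt⟩ := by
      apply Fin.ext
      rw [Fin.add_def]
      simp [Fin.val_natCast, Nat.mod_eq_of_lt hglt, Nat.mod_eq_of_lt hlt]
    rw [heq] at this
    exact this

end Arith

section Forward
variable {n : ℕ} [NeZero n]

lemma forward_dir (hn : 2 ≤ n) (a : Fin n → ℂ) (h : MatReducible (wsMatrix a)) :
    (∃ i j : Fin n, i < j ∧ a i = 0 ∧ a j = 0) ∨ ∃ k : ℕ, PeriodicWeights n k a := by
  obtain ⟨P, hP2, hPH, hP0, hP1, hPA⟩ := h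
  by_cases htwo : ∃ i j : Fin n, i ≠ j ∧ a i = 0 ∧ a j = 0
  · obtain ⟨i, j, hij, hi, hj⟩ := htwo
    left
    rcases lt_or_gt_of_ne hij with h' | h'
    · exact ⟨i, j, h', hi, hj⟩
    · exact ⟨j, i, h', hj, hi⟩
  · have hz : ∀ i j : Fin n, a i = 0 → a j = 0 → i = j := by
      intro i j hi hj
      by_contra hne
      exact htwo ⟨i, j, hne, hi, hj⟩
    obtain ⟨m, hm⟩ : ∃ m : Fin n, ∀ i, i ≠ m → a i ≠ 0 := by
      by_cases hex : ∃ m, a m = 0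
      · obtain ⟨m, hm0⟩ := hex
        exact ⟨m, fun i hi hia => hi (hz i m hia hm0)⟩
      · push_neg at hex
        exact ⟨0, fun i _ => hex i⟩
    by_cases hdiag : ∀ i j : Fin n, i ≠ j → P i j = 0
    · -- P is scalar: contradiction
      exfalso
      have hstep : ∀ i : Fin n, i ≠ m → P (i + 1) (i + 1) = P i i := by
        intro i hi
        have e1 := E1 hn hPA i i
        rw [mul_comm (P i i) (a i)] at e1
        exact mul_left_cancel₀ (hm i hi) e1
      have aux : ∀ t : ℕ, t < n →
          P (m + 1 + (t : Fin n)) (m + 1 + (t : Fin n)) = P (m + 1) (m + 1) := by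
        intro t
        induction t with
        | zero => simp
        | succ t ih =>
          intro ht
          have ht' : t < n := by omega
          have hne : m + 1 + (t : Fin n) ≠ m := by
            intro hcontra
            have h0 : (1 + (t : Fin n) : Fin n) = 0 := by
              have := hcontra
              have h1 : m + (1 + (t : Fin n)) = m + 0 := by rw [add_zero]; rw [← add_assoc]; exact hcontra
              exact add_left_cancel h1
            have h2 : ((1 + t : ℕ) : Fin n) = 0 := by push_cast; exact h0
            have h3 : (1 + t) % n = 0 := by
              calc (1 + t) % n = (((1 + t : ℕ) : Fin n) : ℕ) := (Fin.val_natCast _ _).symm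
                _ = 0 := by rw [h2]; rfl
            rw [Nat.mod_eq_of_lt (by omega)] at h3
            omega
          have heq : ((t + 1 : ℕ) : Fin n) = (t : Fin n) + 1 := fin_cast_succ t
          rw [heq, ← add_assoc]
          rw [hstep _ hne]
          exact ih ht'
      have hconst : ∀ i : Fin n, P i i = P (m + 1) (m + 1) := by
        intro i
        obtain ⟨t, hit⟩ := fin_reach (m + 1) i
        have htn : (i - (m + 1)).val < n := (i - (m + 1)).isLt
        have hit' : i = m + 1 + (((i - (m + 1)).val : ℕ) : Fin n) := by
          rw [Fin.cast_val_eq_self]; ring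
        rw [hit']
        exact aux _ htn
      set c := P (m + 1) (m + 1) with hc
      have hPc : P = c • (1 : Matrix (Fin n) (Fin n) ℂ) := by
        ext i j
        by_cases hij : i = j
        · subst hij; simp [Matrix.one_apply, hconst i]
        · simp [Matrix.one_apply, hij, hdiag i j hij]
      have hcc : c * c = c := by
        have := congrFun (congrFun hP2 (m + 1)) (m + 1)
        rw [hPc] at this
        simpa [Matrix.mul_apply, Matrix.one_apply] using this
      rcases mul_eq_zero.mp (show c * (c - 1) = 0 by ring_nf; linear_combination hcc) with h0 | h0
      · exact hP0 (by rw [hPc, h0]; simp)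
      · exact hP1 (by rw [hPc, sub_eq_zero.mp h0]; simp)
    · push_neg at hdiag
      obtain ⟨i0, j0, hij0, hB0⟩ := hdiag
      set d := j0 - i0 with hd
      have hdne : d ≠ 0 := sub_ne_zero_of_ne (Ne.symm hij0)
      have hA : ∀ i, a i ≠ 0 := by
        by_contra hcon
        push_neg at hcon
        obtain ⟨mz, hmz⟩ := hcon
        have hstart : P (mz + 1) (mz + 1 + d) = 0 := by
          have haz : a (mz + d) ≠ 0 := by
            intro hzz
            exact hdne (by have := hz _ _ hzz hmz; linear_combination this)
          have h5 := key5 hn hPA hPH mz (mz + d) hmz haz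
          have : mz + d + 1 = mz + 1 + d := by ring
          rwa [this] at h5
        have prop : ∀ t : ℕ, P (mz + 1 + (t : Fin n)) (mz + 1 + d + (t : Fin n)) = 0 := by
          intro t
          induction t with
          | zero => simpa using hstart
          | succ t ih =>
            rw [fin_cast_succ, ← add_assoc, ← add_assoc]
            apply key3 hn hPA hPH _ _ ih
            by_cases hcase : a (mz + 1 + (t : Fin n)) = 0
            · right
              intro h2
              apply hdne
              have := hz _ _ hcase h2
              linear_combination -this
            · left; exact hcase
        apply hB0
        obtain ⟨t, hit⟩ := fin_reach (mz + 1) i0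
        have := prop t
        have e1 : mz + 1 + (t : Fin n) = i0 := hit.symm
        have e2 : mz + 1 + d + (t : Fin n) = j0 := by
          rw [hd]; rw [← e1]; ring
        rwa [e1, e2] at this
      have propNZ : ∀ t : ℕ, P (i0 + (t : Fin n)) (j0 + (t : Fin n)) ≠ 0 := by
        intro t
        induction t with
        | zero => simpa using hB0
        | succ t ih =>
          rw [fin_cast_succ, ← add_assoc, ← add_assoc]
          exact key2 hn hPA _ _ ih (hA _) (hA _)
      have habs : ∀ s : Fin n, ‖a s‖ = ‖a (s + d)‖ := by
        intro s
        obtain ⟨t, hst⟩ := fin_reach i0 s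
        have hk := key1 hn hPA hPH (i0 + (t : Fin n)) (j0 + (t : Fin n)) (propNZ t)
        have e1 : i0 + (t : Fin n) = s := hst.symm
        have e2 : j0 + (t : Fin n) = s + d := by rw [← e1, hd]; ring
        rwa [e1, e2] at hk
      right
      exact periodic_of_invariant hn a d hdne habs

end Forward

section BackZeros
variable {n : ℕ} [NeZero n]

lemma back_two_zeros (hn : 2 ≤ n) (a : Fin n → ℂ) (i j : Fin n) (hij : i < j)
    (hi : a i = 0) (hj : a j = 0) : MatReducible (wsMatrix a) := by
  classical
  set χ : Fin n → ℂ := fun m => if (i : ℕ) < (m : ℕ) ∧ (m : ℕ) ≤ (j : ℕ) then 1 else 0 with hχ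
  have hidem : (fun m => χ m * χ m) = χ := by
    funext m
    simp only [hχ]
    split <;> simp
  have hstar : star χ = χ := by
    funext m
    simp only [hχ, Pi.star_apply]
    split <;> simp
  refine ⟨Matrix.diagonal χ, ?_, ?_, ?_, ?_, ?_⟩
  · rw [Matrix.diagonal_mul_diagonal, hidem]
  · rw [Matrix.diagonal_conjTranspose, hstar]
  · intro h0
    have := congrFun (congrFun h0 j) j
    have hjj : χ j = 1 := by simp [hχ, hij]
    simp [Matrix.diagonal_apply_eq, hjj] at this
  · intro h1
    have := congrFun (congrFun h1 i) i
    have hii : χ i = 0 := by simp [hχ]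
    simp [Matrix.diagonal_apply_eq, hii, Matrix.one_apply] at this
  · ext m l
    rw [Matrix.mul_apply, Matrix.mul_apply]
    rw [Finset.sum_eq_single l, Finset.sum_eq_single m]
    · -- a m * ... : wsMatrix a m l * χ l = χ m * wsMatrix a m l
      rw [Matrix.diagonal_apply_eq, Matrix.diagonal_apply_eq]
      rw [wsMatrix_apply a hn]
      by_cases hml : l = m + 1
      · subst hml
        rw [if_pos rfl]
        by_cases hzm : a m = 0
        · rw [hzm, zero_mul, mul_zero]
        · -- m ≠ i, m ≠ j; show χ (m+1) = χ m
          have hmi : m ≠ i := fun h => hzm (h ▸ hi)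
          have hmj : m ≠ j := fun h => hzm (h ▸ hj)
          have hval : ((m + 1 : Fin n) : ℕ) = ((m : ℕ) + 1) % n := by
            rw [Fin.add_def]
            congr 1
            have : ((1 : Fin n) : ℕ) = 1 % n := rfl
            rw [this, Nat.mod_eq_of_lt (show 1 < n by omega)]
          have hmi' : (m : ℕ) ≠ (i : ℕ) := fun h => hmi (Fin.ext h)
          have hmj' : (m : ℕ) ≠ (j : ℕ) := fun h => hmj (Fin.ext h)
          have hilt : (i : ℕ) < (j : ℕ) := hij
          have hjlt : (j : ℕ) < n := j.isLt
          have hmlt : (m : ℕ) < n := m.isLt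
          have hcond : ((i : ℕ) < ((m + 1 : Fin n) : ℕ) ∧ ((m + 1 : Fin n) : ℕ) ≤ (j : ℕ))
              ↔ ((i : ℕ) < (m : ℕ) ∧ (m : ℕ) ≤ (j : ℕ)) := by
            by_cases hlast : (m : ℕ) + 1 = n
            · have h0 : ((m : ℕ) + 1) % n = 0 := by rw [hlast]; exact Nat.mod_self n
              rw [hval, h0]
              constructor
              · rintro ⟨h1, h2⟩; omega
              · rintro ⟨h1, h2⟩; omega
            · have h1 : ((m : ℕ) + 1) % n = (m : ℕ) + 1 := Nat.mod_eq_of_lt (by omega)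
              rw [hval, h1]
              omega
          have : χ (m + 1) = χ m := by
            simp only [hχ]
            exact if_congr hcond rfl rfl
          rw [this, mul_comm]
      · rw [if_neg hml, zero_mul, mul_zero]
    · intro b _ hb
      rw [Matrix.diagonal_apply_ne' _ hb, zero_mul]
    · simp
    · intro b _ hb
      rw [Matrix.diagonal_apply_ne _ hb, mul_zero]
    · simp

end BackZeros

section GP
variable {n : ℕ} [NeZero n]

/-- Powers of a "twisted shift" matrix. -/
lemma shift_pow (e : Fin n) (w : Fin n → ℂ) (M : Matrix (Fin n) (Fin n) ℂ)
    (hM : ∀ i j, M i j = if j = i + e then w i else 0) (s : ℕ) (i j : Fin n) :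
    (M ^ s) i j = if j = i + s • e then (∏ t ∈ Finset.range s, w (i + t • e)) else 0 := by
  induction s generalizing i j with
  | zero =>
    simp only [pow_zero, Matrix.one_apply, zero_smul, add_zero, Finset.range_zero,
      Finset.prod_empty]
    by_cases h : i = j
    · subst h; simp
    · rw [if_neg h, if_neg (Ne.symm h)]
  | succ s ih =>
    rw [pow_succ, Matrix.mul_apply]
    have hM' : ∀ l, M l j = if l = j - e then w (j - e) else 0 := by
      intro l
      rw [hM l j]
      by_cases h : l = j - e
      · subst h; simp
      · rw [if_neg h, if_neg (fun hj' => h (by rw [hj']; ring))]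
    rw [Finset.sum_eq_single (j - e)]
    · rw [ih, hM']
      rw [if_pos rfl]
      by_cases hc : j - e = i + s • e
      · have hc2 : j = i + (s + 1) • e := by
          rw [succ_nsmul, ← add_assoc, ← hc]; ring
        rw [if_pos hc, if_pos hc2, Finset.prod_range_succ]
        congr 1
        rw [hc]
      · have hc2 : j ≠ i + (s + 1) • e := by
          intro hj'
          apply hc
          rw [hj', succ_nsmul]; ring
        rw [if_neg hc, if_neg hc2, zero_mul]
    · intro b _ hb
      rw [hM' b, if_neg hb, mul_zero]
    · simp

lemma wsMatrix_pow (hn : 2 ≤ n) (a : Fin n → ℂ) (s : ℕ) (i j : Fin n) :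
    ((wsMatrix a) ^ s) i j =
      if j = i + (s : Fin n) then (∏ t ∈ Finset.range s, a (i + (t : Fin n))) else 0 := by
  have h1 : ∀ (t : ℕ), t • (1 : Fin n) = (t : Fin n) := by
    intro t; rw [nsmul_eq_mul, mul_one]
  have := shift_pow 1 a (wsMatrix a) (fun i j => wsMatrix_apply a hn i j) s i j
  rw [this, h1]
  congr 1
  apply Finset.prod_congr rfl
  intro t _
  rw [h1]

lemma wsMatrix_pow_n (hn : 2 ≤ n) (a : Fin n → ℂ) :
    (wsMatrix a) ^ n = (∏ x : Fin n, a x) • (1 : Matrix (Fin n) (Fin n) ℂ) := by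
  ext i j
  rw [wsMatrix_pow hn a n i j]
  rw [Fin.natCast_self, add_zero]
  have hprod : ∏ t ∈ Finset.range n, a (i + (t : Fin n)) = ∏ x : Fin n, a x := by
    rw [← Fin.prod_univ_eq_prod_range (fun t => a (i + (t : Fin n))) n]
    have : ∀ x : Fin n, a (i + ((x : ℕ) : Fin n)) = a (i + x) := by
      intro x; rw [Fin.cast_val_eq_self]
    rw [Fintype.prod_congr _ _ this]
    exact Fintype.prod_equiv (Equiv.addLeft i) _ _ (fun x => rfl)
  by_cases hij : j = i
  · subst hij; simp [Matrix.one_apply, hprod]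
  · rw [if_neg (fun h => hij (by rw [h])), Matrix.smul_apply, Matrix.one_apply,
      if_neg (fun h => hij h.symm), smul_zero]

end GP

section BackPeriodic
variable {n : ℕ} [NeZero n]

lemma pow_eq_of_abs {x y : ℝ} (hx : 0 ≤ x) (hy : 0 ≤ y) {p : ℕ} (hp : p ≠ 0)
    (h : x ^ p = y ^ p) : x = y := by
  rcases lt_trichotomy x y with h' | h' | h'
  · exact absurd h (ne_of_lt (pow_lt_pow_left₀ h' hx hp))
  · exact h'
  · exact absurd h.symm (ne_of_lt (pow_lt_pow_left₀ h' hy hp))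

lemma back_periodic (hn : 2 ≤ n) (a : Fin n → ℂ) (k : ℕ) (hper : PeriodicWeights n k a)
    (hA : ∀ i, a i ≠ 0) : MatReducible (wsMatrix a) := by
  classical
  obtain ⟨hk1, hk2, hkdvd, hcyc⟩ := hper
  set A := wsMatrix a with hA'
  have hkn : k < n := lt_of_le_of_lt hk2 (Nat.div_lt_self (by omega) (by norm_num))
  set p := n / k with hp
  have hpk : k * p = n := Nat.mul_div_cancel' hkdvd
  have hpk' : p * k = n := by rw [mul_comm]; exact hpk
  have hp2 : 2 ≤ p := by
    rcases Nat.lt_or_ge p 2 with h2 | h2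
    · interval_cases p <;> omega
    · exact h2
  set kf : Fin n := (k : Fin n) with hkf
  have hkfval : (kf : ℕ) = k := by
    rw [hkf, Fin.val_natCast, Nat.mod_eq_of_lt hkn]
  -- full cyclic periodicity
  have hres : ∀ (t x : ℕ) (hx : x < n) (h2 : x + t * k < n),
      ‖a ⟨x, hx⟩‖ = ‖a ⟨x + t * k, h2⟩‖ := by
    intro t
    induction t with
    | zero =>
      intro x hx h2
      have he : (⟨x, hx⟩ : Fin n) = ⟨x + 0 * k, h2⟩ := Fin.ext (by simp)
      rw [he]
    | succ t ih =>
      intro x hx h2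
      have hmul : (t + 1) * k = t * k + k := by ring
      have hb : x + t * k < n := by omega
      rw [ih x hx hb]
      have hlt : ((⟨x + t * k, hb⟩ : Fin n) : ℕ) + k < n := by
        simpa using (by omega : x + t * k + k < n)
      rw [hcyc ⟨x + t * k, hb⟩ hlt]
      have he : (⟨((⟨x + t * k, hb⟩ : Fin n) : ℕ) + k, hlt⟩ : Fin n) = ⟨x + (t + 1) * k, h2⟩ :=
        Fin.ext (by simp; ring)
      rw [he]
  have hstep : ∀ s : Fin n, ‖a (s + kf)‖ = ‖a s‖ := by
    intro s
    have hsval : ((s + kf : Fin n) : ℕ) = ((s : ℕ) + k) % n := by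
      rw [Fin.add_def, hkfval]
    by_cases hc : (s : ℕ) + k < n
    · have hform : s + kf = ⟨(s : ℕ) + k, hc⟩ :=
        Fin.ext (by rw [hsval, Nat.mod_eq_of_lt hc])
      rw [hform]
      exact (hcyc s hc).symm
    · push_neg at hc
      have hx : (s : ℕ) + k - n < n := by have := s.isLt; omega
      have h1 : ((s + kf : Fin n) : ℕ) = (s : ℕ) + k - n := by
        rw [hsval]
        have h2 : ((s : ℕ) + k) % n = ((s : ℕ) + k - n) % n := by
          conv_lhs => rw [show (s : ℕ) + k = ((s : ℕ) + k - n) + n by omega]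
          rw [Nat.add_mod_right]
        rw [h2, Nat.mod_eq_of_lt hx]
      have hform : s + kf = ⟨(s : ℕ) + k - n, hx⟩ := Fin.ext h1
      have h3 : (p - 1) * k = n - k := by
        rw [Nat.sub_mul, hpk', one_mul]
      have hdiff : (s : ℕ) = ((s : ℕ) + k - n) + (p - 1) * k := by
        rw [h3]; omega
      have hlt2 : ((s : ℕ) + k - n) + (p - 1) * k < n := hdiff ▸ s.isLt
      have hres' := hres (p - 1) ((s : ℕ) + k - n) hx hlt2
      rw [hform, hres']
      have he : (⟨((s : ℕ) + k - n) + (p - 1) * k, hlt2⟩ : Fin n) = s := Fin.ext hdiff.symm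
      rw [he]
  -- the product function
  set q : Fin n → ℂ := fun i => ∏ t ∈ Finset.range k, a (i + (t : Fin n)) with hq
  have hqne : ∀ i, q i ≠ 0 := by
    intro i
    rw [hq]
    exact Finset.prod_ne_zero_iff.mpr (fun t _ => hA _)
  have hAk : ∀ i j, (A ^ k) i j = if j = i + kf then q i else 0 := fun i j =>
    wsMatrix_pow hn a k i j
  -- |q| is constant
  have hqrel : ∀ i : Fin n, q i * a (i + kf) = q (i + 1) * a i := by
    intro i
    rw [hq]
    simp only
    rw [← Finset.prod_range_succ (fun t => a (i + (t : Fin n))) k]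
    have h2 : (∏ t ∈ Finset.range (k + 1), a (i + (t : Fin n)))
        = (∏ t ∈ Finset.range k, a (i + 1 + (t : Fin n))) * a i := by
      rw [Finset.prod_range_succ' (fun t => a (i + (t : Fin n))) k]
      congr 1
      · apply Finset.prod_congr rfl
        intro t _
        congr 1
        rw [fin_cast_succ]
        ring
      · simp
    rw [← h2]
  have hqstep : ∀ i : Fin n, ‖q (i + 1)‖ = ‖q i‖ := by
    intro i
    have := congrArg norm (hqrel i)
    rw [norm_mul, norm_mul, hstep i] at this
    exact (mul_right_cancel₀ (by simpa using hA i) this).symm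
  have hqabs : ∀ i : Fin n, ‖q i‖ = ‖q 0‖ := by
    have aux : ∀ t : ℕ, ‖q ((0 : Fin n) + (t : Fin n))‖ = ‖q 0‖ := by
      intro t
      induction t with
      | zero => simp
      | succ t ih =>
        rw [fin_cast_succ, ← add_assoc, hqstep]
        exact ih
    intro i
    have h1 : i = (0 : Fin n) + ((i : ℕ) : Fin n) := by rw [Fin.cast_val_eq_self, zero_add]
    rw [h1]
    exact aux _
  set c := ‖q 0‖ with hc
  have hcpos : 0 < c := by
    rw [hc]
    exact norm_pos_iff.mpr (hqne 0)
  -- the total product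
  set δ : ℂ := ∏ x : Fin n, a x with hδ
  have hδne : δ ≠ 0 := Finset.prod_ne_zero_iff.mpr (fun x _ => hA x)
  have hAn : A ^ n = δ • (1 : Matrix (Fin n) (Fin n) ℂ) := wsMatrix_pow_n hn a
  obtain ⟨μ, hμ⟩ := IsAlgClosed.exists_pow_nat_eq (k := ℂ) δ (show 0 < p by omega)
  have hμne : μ ≠ 0 := by
    intro h0
    rw [h0, zero_pow (by omega)] at hμ
    exact hδne hμ.symm
  -- |δ| = c ^ p  via the (0,0) entry of (A^k)^p = A^n
  have hppow : (A ^ k) ^ p = A ^ n := by rw [← pow_mul, hpk]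
  have hpkf : p • kf = 0 := by
    rw [hkf, nsmul_eq_mul]
    have h2 : ((p : Fin n) * (k : Fin n)) = ((p * k : ℕ) : Fin n) := by push_cast; ring
    rw [h2, hpk', Fin.natCast_self]
  have hdelta_prod : δ = ∏ t ∈ Finset.range p, q ((t : ℕ) • kf) := by
    have h1 := shift_pow kf q (A ^ k) hAk p 0 0
    rw [hpkf, add_zero, if_pos rfl] at h1
    have h2 : ((A ^ k) ^ p) 0 0 = δ := by
      rw [hppow, hAn, Matrix.smul_apply, Matrix.one_apply_eq, smul_eq_mul, mul_one]
    rw [← h2, h1]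
    apply Finset.prod_congr rfl
    intro t _
    congr 1
    rw [zero_add]
  have habsδ : ‖δ‖ = c ^ p := by
    rw [hdelta_prod, norm_prod]
    rw [Finset.prod_congr rfl (fun t _ => hqabs ((t : ℕ) • kf))]
    rw [Finset.prod_const, Finset.card_range]
  have habsμ : ‖μ‖ = c := by
    apply pow_eq_of_abs (norm_nonneg _) (le_of_lt hcpos) (show p ≠ 0 by omega)
    rw [← norm_pow, hμ, habsδ]
  -- the unitary U
  have hM' : ∀ l i, (A ^ k) l i = if l = i - kf then q (i - kf) else 0 := by
    intro l i
    rw [hAk l i]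
    by_cases h : l = i - kf
    · subst h; rw [if_pos rfl, if_pos (by ring)]
    · rw [if_neg h, if_neg (fun hi' => h (by rw [hi']; ring))]
  set U : Matrix (Fin n) (Fin n) ℂ := μ⁻¹ • (A ^ k) with hU
  have hcne : (c : ℂ) ≠ 0 := by
    simp only [ne_eq, Complex.ofReal_eq_zero]
    exact ne_of_gt hcpos
  have hqc : ∀ s : Fin n, star (q s) * q s = ((c : ℂ)) ^ 2 := by
    intro s
    rw [Complex.star_def, mul_comm, Complex.mul_conj, Complex.normSq_eq_norm_sq, hqabs]
    push_cast
    ring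
  have hMM : (A ^ k)ᴴ * (A ^ k) = ((c : ℂ) ^ 2) • (1 : Matrix (Fin n) (Fin n) ℂ) := by
    ext i j
    rw [Matrix.mul_apply]
    rw [Finset.sum_eq_single (i - kf)]
    · rw [Matrix.conjTranspose_apply, hM' (i - kf) i, if_pos rfl, hAk (i - kf) j]
      by_cases hij : i = j
      · subst hij
        rw [if_pos (by ring), hqc, Matrix.smul_apply, Matrix.one_apply_eq, smul_eq_mul, mul_one]
      · rw [if_neg (fun h => hij (by rw [h]; ring)), mul_zero, Matrix.smul_apply,
          Matrix.one_apply_ne hij, smul_zero]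
    · intro b _ hb
      rw [Matrix.conjTranspose_apply, hM' b i, if_neg hb, star_zero, zero_mul]
    · simp
  have hUH : Uᴴ * U = 1 := by
    rw [hU, Matrix.conjTranspose_smul, Matrix.smul_mul, Matrix.mul_smul, smul_smul, hMM,
      smul_smul]
    have hsc : star μ⁻¹ * μ⁻¹ * (c : ℂ) ^ 2 = 1 := by
      rw [Complex.star_def, map_inv₀, ← mul_inv, mul_comm ((starRingEnd ℂ) μ) μ,
        Complex.mul_conj]
      have h2 : (Complex.normSq μ : ℂ) = (c : ℂ) ^ 2 := by
        rw [Complex.normSq_eq_norm_sq, habsμ]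
        push_cast
        ring
      rw [h2]
      field_simp
    rw [hsc, one_smul]
  have hUp : U ^ p = 1 := by
    rw [hU, smul_pow, ← pow_mul, hpk, hAn, smul_smul, inv_pow, hμ,
      inv_mul_cancel₀ hδne, one_smul]
  have hstarU : ∀ t, (U ^ t)ᴴ * U ^ t = 1 := by
    intro t
    induction t with
    | zero => simp
    | succ t ih =>
      rw [pow_succ, Matrix.conjTranspose_mul]
      have h1 : Uᴴ * (U ^ t)ᴴ * (U ^ t * U) = Uᴴ * (((U ^ t)ᴴ * U ^ t) * U) := by
        rw [mul_assoc, ← mul_assoc ((U ^ t)ᴴ)]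
      rw [h1, ih, one_mul, hUH]
  have hstar_t : ∀ t, t ≤ p → (U ^ t)ᴴ = U ^ (p - t) := by
    intro t ht
    have h1 : U ^ t * U ^ (p - t) = 1 := by
      rw [← pow_add, Nat.add_sub_cancel' ht, hUp]
    calc (U ^ t)ᴴ = (U ^ t)ᴴ * (U ^ t * U ^ (p - t)) := by rw [h1, mul_one]
      _ = ((U ^ t)ᴴ * U ^ t) * U ^ (p - t) := by rw [mul_assoc]
      _ = U ^ (p - t) := by rw [hstarU t, one_mul]
  set S : Matrix (Fin n) (Fin n) ℂ := ∑ t ∈ Finset.range p, U ^ t with hS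
  have hshift : ∑ t ∈ Finset.range p, U ^ (t + 1) = S := by
    have h1 := Finset.sum_range_succ (fun t => U ^ t) p
    have h2 := Finset.sum_range_succ' (fun t => U ^ t) p
    rw [hUp] at h1
    rw [h2] at h1
    simp only [pow_zero] at h1
    exact add_right_cancel h1
  have hUS : U * S = S := by
    rw [hS, Finset.mul_sum]
    rw [Finset.sum_congr rfl (fun t _ => (pow_succ' U t).symm)]
    exact hshift
  have hUtS : ∀ t, U ^ t * S = S := by
    intro t
    induction t with
    | zero => rw [pow_zero, one_mul]
    | succ t ih => rw [pow_succ, mul_assoc, hUS, ih]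
  have hSS : S * S = (p : ℂ) • S := by
    nth_rewrite 1 [hS]
    rw [Finset.sum_mul]
    rw [Finset.sum_congr rfl (fun t _ => hUtS t)]
    rw [Finset.sum_const, Finset.card_range, Nat.cast_smul_eq_nsmul ℂ]
  set P : Matrix (Fin n) (Fin n) ℂ := (p : ℂ)⁻¹ • S with hP
  have hpc : (p : ℂ) ≠ 0 := Nat.cast_ne_zero.mpr (by omega)
  have hU_entry : ∀ t, (U ^ t) = (μ⁻¹) ^ t • A ^ (k * t) := by
    intro t
    rw [hU, smul_pow, ← pow_mul]
  have hklt : ∀ t, t < p → k * t < n := by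
    intro t ht
    have h1 : t ≤ p - 1 := by omega
    have h2 : k * t ≤ k * (p - 1) := Nat.mul_le_mul_left k h1
    have h3 : k * (p - 1) = n - k := by rw [Nat.mul_sub, hpk, mul_one]
    omega
  have hS00 : S 0 0 = 1 := by
    rw [hS, Matrix.sum_apply]
    rw [Finset.sum_eq_single 0]
    · simp
    · intro t ht ht0
      have htp := Finset.mem_range.mp ht
      rw [hU_entry t, Matrix.smul_apply, hA', wsMatrix_pow hn a (k * t) 0 0, if_neg, smul_zero]
      intro hcontra
      rw [zero_add] at hcontra
      have hval := congrArg Fin.val hcontra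
      rw [Fin.val_natCast, Nat.mod_eq_of_lt (hklt t htp)] at hval
      simp only [Fin.val_zero] at hval
      have : k * t ≠ 0 := Nat.mul_ne_zero (by omega) ht0
      omega
    · intro h'
      exfalso
      rw [Finset.mem_range] at h'
      omega
  have hkf0 : kf ≠ 0 := by
    intro h
    have := congrArg Fin.val h
    rw [hkfval] at this
    simp at this
    omega
  have hSkf : S 0 kf = μ⁻¹ * q 0 := by
    rw [hS, Matrix.sum_apply]
    rw [Finset.sum_eq_single 1]
    · rw [pow_one, hU, Matrix.smul_apply, hAk 0 kf, if_pos (by rw [zero_add]), smul_eq_mul]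
    · intro t ht ht1
      have htp := Finset.mem_range.mp ht
      rw [hU_entry t, Matrix.smul_apply, hA', wsMatrix_pow hn a (k * t) 0 kf, if_neg, smul_zero]
      intro hcontra
      rw [zero_add] at hcontra
      have hval := congrArg Fin.val hcontra
      rw [hkfval] at hval
      rw [Fin.val_natCast, Nat.mod_eq_of_lt (hklt t htp)] at hval
      have : t = 1 := by
        rcases Nat.lt_or_ge t 1 with h' | h'
        · interval_cases t
          · omega
        · nlinarith
      exact ht1 this
    · intro h1
      exfalso
      rw [Finset.mem_range] at h1
      omega
  refine ⟨P, ?_, ?_, ?_, ?_, ?_⟩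
  · rw [hP, Matrix.smul_mul, Matrix.mul_smul, smul_smul, hSS, smul_smul]
    congr 1
    field_simp
  · have hSH : Sᴴ = S := by
      rw [hS, Matrix.conjTranspose_sum]
      rw [Finset.sum_congr rfl
        (fun t ht => hstar_t t (le_of_lt (Finset.mem_range.mp ht)))]
      rw [Finset.sum_congr rfl
        (fun t ht => show U ^ (p - t) = (fun j => U ^ (j + 1)) (p - 1 - t) by
          have := Finset.mem_range.mp ht
          simp only
          congr 1
          omega)]
      rw [Finset.sum_range_reflect (fun j => U ^ (j + 1)) p]
      exact hshift
    rw [hP, Matrix.conjTranspose_smul, hSH]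
    congr 1
    simp
  · intro h0
    have := congrFun (congrFun h0 0) 0
    rw [hP, Matrix.smul_apply, hS00, Matrix.zero_apply, smul_eq_mul, mul_one] at this
    exact inv_ne_zero hpc this
  · intro h1
    have := congrFun (congrFun h1 0) kf
    rw [hP, Matrix.smul_apply, hSkf, Matrix.one_apply_ne (Ne.symm hkf0), smul_eq_mul] at this
    exact (mul_ne_zero (inv_ne_zero hpc) (mul_ne_zero (inv_ne_zero hμne) (hqne 0))) this
  · have hAU : A * U = U * A := by
      rw [hU, Matrix.mul_smul, Matrix.smul_mul]
      congr 1
      rw [← pow_succ', ← pow_succ]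
    have hAUt : ∀ t, A * U ^ t = U ^ t * A := by
      intro t
      exact (Commute.pow_right hAU t)
    have hASA : A * S = S * A := by
      rw [hS, Finset.mul_sum, Finset.sum_mul]
      exact Finset.sum_congr rfl (fun t _ => hAUt t)
    rw [hP, Matrix.mul_smul, Matrix.smul_mul, hASA]




end BackPeriodic

section Glue
variable {n : ℕ} [NeZero n]

lemma zeros_of_periodic (hn : 2 ≤ n) (a : Fin n → ℂ) (k : ℕ) (hper : PeriodicWeights n k a)
    (i : Fin n) (hi : a i = 0) : ∃ i j : Fin n, i < j ∧ a i = 0 ∧ a j = 0 := by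
  obtain ⟨hk1, hk2, hkdvd, hcyc⟩ := hper
  have h2k : 2 * k ≤ n := by
    have := Nat.div_mul_le_self n 2
    omega
  by_cases hc : (i : ℕ) + k < n
  · refine ⟨i, ⟨(i : ℕ) + k, hc⟩, ?_, hi, ?_⟩
    · rw [Fin.lt_def]; simp; omega
    · have h0 := hcyc i hc
      rw [hi, norm_zero] at h0
      exact norm_eq_zero.mp h0.symm
  · push_neg at hc
    have hik : k ≤ (i : ℕ) := by have := i.isLt; omega
    have hlt : (i : ℕ) - k < n := by have := i.isLt; omega
    refine ⟨⟨(i : ℕ) - k, hlt⟩, i, ?_, ?_, hi⟩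
    · rw [Fin.lt_def]; show (i : ℕ) - k < i; omega
    · have hc2 : ((⟨(i : ℕ) - k, hlt⟩ : Fin n) : ℕ) + k < n := by
        simp
        have := i.isLt
        omega
      have := hcyc ⟨(i : ℕ) - k, hlt⟩ hc2
      have he : (⟨((⟨(i : ℕ) - k, hlt⟩ : Fin n) : ℕ) + k, hc2⟩ : Fin n) = i :=
        Fin.ext (by simp; omega)
      rw [he, hi, norm_zero] at this
      exact norm_eq_zero.mp this

end Glue

theorem stmt13 (n : ℕ) (hn : 2 ≤ n) (a : Fin n → ℂ) :
    MatReducible (wsMatrix a) ↔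
      ((∃ i j : Fin n, i < j ∧ a i = 0 ∧ a j = 0) ∨ ∃ k : ℕ, PeriodicWeights n k a) := by
  haveI : NeZero n := ⟨by omega⟩
  constructor
  · exact forward_dir hn a
  · rintro (⟨i, j, hij, hi, hj⟩ | ⟨k, hper⟩)
    · exact back_two_zeros hn a i j hij hi hj
    · by_cases hex : ∃ i, a i = 0
      · obtain ⟨i, hi⟩ := hex
        obtain ⟨i', j', hij', hi', hj'⟩ := zeros_of_periodic hn a k hper i hi
        exact back_two_zeros hn a i' j' hij' hi' hj'
      · push_neg at hex
        exact back_periodic hn a k hper hex
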